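/- Let 𝒢 = P_m({u}, G_1, …, G_{m−1}) be the series graph where each G_i is a d_i-regular graph on n_i vertices, and let H be the graph obtained from 𝒢 by attaching a one-way infinite path at u. Fix j ∈ {1, …, m−1} and vertices a, b of G_j. Then for all real t, |⟨e_b, e^{−itA(H)} e_a⟩ − ⟨e_b, e^{−itA(G_j)} e_a⟩| ≤ 2/n_j. In particular, if G_j has perfect state transfer between a and b at time τ (|⟨e_b, e^{−iτA(G_j)} e_a⟩| = 1), then |⟨e_b, e^{−iτA(H)} e_a⟩| ≥ 1 − 2/n_j. -/

import Mathlib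

noncomputable section

open Matrix

/-- Vertices of the series graph `P_m({u}, G_1, …, G_{m-1})` (with `M = m - 1` joined
graphs) together with an attached one-way infinite tail: `Sum.inl ()` is the vertex `u`,
`Sum.inr (Sum.inl ⟨i, a⟩)` is the vertex `a` of the graph `G_{i+1}`, and
`Sum.inr (Sum.inr j)` is the tail vertex `q_{j+1}`. -/
abbrev SeriesV (M : ℕ) (nn : Fin M → ℕ) := Unit ⊕ ((Σ i : Fin M, Fin (nn i)) ⊕ ℕ)

/-- The vertex `a` of the `i`-th joined graph, as a vertex of the series graph. -/
def gv {M : ℕ} {nn : Fin M → ℕ} (i : Fin M) (a : Fin (nn i)) : SeriesV M nn :=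
  Sum.inr (Sum.inl ⟨i, a⟩)

/-- Adjacency in `H`: the edges inside each `G_i`; all edges between `V(G_i)` and
`V(G_{i+1})` (consecutive joins); all edges between `u` and `V(G_1)`; the edge `u q_1`;
and the path edges `q_j q_{j+1}` for `j ≥ 1`. -/
def seriesAdj (M : ℕ) (nn : Fin M → ℕ) (G : ∀ i : Fin M, SimpleGraph (Fin (nn i)))
    (x y : SeriesV M nn) : Prop :=
  (∃ (i : Fin M) (a b : Fin (nn i)), (G i).Adj a b ∧ x = gv i a ∧ y = gv i b) ∨
  (∃ (i j : Fin M) (a : Fin (nn i)) (b : Fin (nn j)), (j : ℕ) = (i : ℕ) + 1 ∧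
    ((x = gv i a ∧ y = gv j b) ∨ (y = gv i a ∧ x = gv j b))) ∨
  (∃ (i : Fin M) (a : Fin (nn i)), (i : ℕ) = 0 ∧
    ((x = Sum.inl () ∧ y = gv i a) ∨ (y = Sum.inl () ∧ x = gv i a))) ∨
  ((x = Sum.inl () ∧ y = Sum.inr (Sum.inr 0)) ∨ (y = Sum.inl () ∧ x = Sum.inr (Sum.inr 0))) ∨
  (∃ j : ℕ, (x = Sum.inr (Sum.inr j) ∧ y = Sum.inr (Sum.inr (j + 1))) ∨
    (y = Sum.inr (Sum.inr j) ∧ x = Sum.inr (Sum.inr (j + 1))))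

/-- The Hilbert space `ℓ²(V(H))`. -/
abbrev seriesSpace (M : ℕ) (nn : Fin M → ℕ) := lp (fun _ : SeriesV M nn => ℂ) 2

/-- The standard orthonormal basis vector `e_w` of `ℓ²(V(H))`. -/
def stdVec {M : ℕ} {nn : Fin M → ℕ} (w : SeriesV M nn) : seriesSpace M nn := lp.single 2 w 1

open scoped Classical
open scoped Nat

/-! ### Auxiliary lemmas -/

section Aux

local notation "⟪" x ", " y "⟫" => @inner ℂ _ _ x y

variable {M : ℕ} {nn : Fin M → ℕ}

lemma gv_inj {i i' : Fin M} {a : Fin (nn i)} {a' : Fin (nn i')} (h : gv i a = gv i' a') :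
    i = i' ∧ HEq a a' := by
  simpa [gv] using h

lemma gv_eq_gv_iff {i : Fin M} {c c' : Fin (nn i)} : gv i c = gv i c' ↔ c = c' := by
  constructor
  · intro h
    exact heq_iff_eq.mp (gv_inj h).2
  · rintro rfl; rfl

section AdjChar

variable (G : ∀ i : Fin M, SimpleGraph (Fin (nn i)))

lemma adj_gv_same (j : Fin M) (b a : Fin (nn j)) :
    seriesAdj M nn G (gv j b) (gv j a) ↔ (G j).Adj b a := by
  constructor
  · rintro (⟨i, x, y, hxy, hx, hy⟩ | ⟨i, k, x, y, hk, (⟨hx,hy⟩|⟨hx,hy⟩)⟩ |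
      ⟨i, x, hi, (⟨h,h2⟩|⟨h,h2⟩)⟩ | (⟨h,h2⟩|⟨h,h2⟩) | ⟨k, (⟨h,h2⟩|⟨h,h2⟩)⟩)
    · obtain ⟨h1, hxx⟩ := gv_inj hx
      subst h1; rw [heq_iff_eq] at hxx; subst hxx
      obtain ⟨-, hyy⟩ := gv_inj hy
      rw [heq_iff_eq] at hyy; subst hyy; exact hxy
    · obtain ⟨h1, -⟩ := gv_inj hx
      obtain ⟨h2, -⟩ := gv_inj hy
      subst h1; subst h2; omega
    · obtain ⟨h1, -⟩ := gv_inj hx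
      obtain ⟨h2, -⟩ := gv_inj hy
      subst h1; subst h2; omega
    all_goals simp [gv] at *
  · exact fun h => Or.inl ⟨j, b, a, h, rfl, rfl⟩

lemma adj_u_gv (j : Fin M) (a : Fin (nn j)) :
    seriesAdj M nn G (Sum.inl ()) (gv j a) ↔ (j : ℕ) = 0 := by
  constructor
  · rintro (⟨i, x, y, hxy, hx, hy⟩ | ⟨i, k, x, y, hk, (⟨hx,hy⟩|⟨hx,hy⟩)⟩ |
      ⟨i, x, hi, (⟨h,h2⟩|⟨h,h2⟩)⟩ | (⟨h,h2⟩|⟨h,h2⟩) | ⟨k, (⟨h,h2⟩|⟨h,h2⟩)⟩)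
    · simp [gv] at hx
    · simp [gv] at hx
    · simp [gv] at hy
    · obtain ⟨h1, -⟩ := gv_inj h2
      subst h1; exact hi
    · simp [gv] at h
    · simp [gv] at h2
    · simp [gv] at h2
    · simp [gv] at h
    · simp [gv] at h2
  · exact fun h => Or.inr (Or.inr (Or.inl ⟨j, a, h, Or.inl ⟨rfl, rfl⟩⟩))

lemma adj_gv_ne {i j : Fin M} (hij : i ≠ j) (c : Fin (nn i)) (a : Fin (nn j)) :
    seriesAdj M nn G (gv i c) (gv j a) ↔ ((i : ℕ) = (j : ℕ) + 1 ∨ (j : ℕ) = (i : ℕ) + 1) := by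
  constructor
  · rintro (⟨i', x, y, hxy, hx, hy⟩ | ⟨i', k', x, y, hk, (⟨hx,hy⟩|⟨hx,hy⟩)⟩ |
      ⟨i', x, hi, (⟨h,h2⟩|⟨h,h2⟩)⟩ | (⟨h,h2⟩|⟨h,h2⟩) | ⟨k, (⟨h,h2⟩|⟨h,h2⟩)⟩)
    · obtain ⟨h1, -⟩ := gv_inj hx
      obtain ⟨h2, -⟩ := gv_inj hy
      exact absurd (h1.trans h2.symm) hij
    · obtain ⟨h1, -⟩ := gv_inj hx
      obtain ⟨h2, -⟩ := gv_inj hy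
      subst h1; subst h2; right; exact hk
    · obtain ⟨h1, -⟩ := gv_inj hx
      obtain ⟨h2, -⟩ := gv_inj hy
      subst h1; subst h2; left; exact hk
    all_goals simp [gv] at *
  · rintro (h1 | h1)
    · exact Or.inr (Or.inl ⟨j, i, a, c, h1, Or.inr ⟨rfl, rfl⟩⟩)
    · exact Or.inr (Or.inl ⟨i, j, c, a, h1, Or.inl ⟨rfl, rfl⟩⟩)

lemma adj_tail_gv (k : ℕ) (j : Fin M) (a : Fin (nn j)) :
    ¬ seriesAdj M nn G (Sum.inr (Sum.inr k)) (gv j a) := by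
  rintro (⟨i, x, y, hxy, hx, hy⟩ | ⟨i, k', x, y, hk, (⟨hx,hy⟩|⟨hx,hy⟩)⟩ |
      ⟨i, x, hi, (⟨h,h2⟩|⟨h,h2⟩)⟩ | (⟨h,h2⟩|⟨h,h2⟩) | ⟨k', (⟨h,h2⟩|⟨h,h2⟩)⟩)
  all_goals simp [gv] at *

end AdjChar

/-! ### The embedding of `ℓ²(V(G_j))` into `ℓ²(V(H))` -/

def iotaL (j : Fin M) : EuclideanSpace ℂ (Fin (nn j)) →ₗ[ℂ] seriesSpace M nn where
  toFun v := ∑ c, v c • stdVec (gv j c)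
  map_add' v w := by
    simp only [PiLp.add_apply, add_smul]
    exact Finset.sum_add_distrib
  map_smul' r v := by
    simp only [PiLp.smul_apply, smul_eq_mul, RingHom.id_apply, Finset.smul_sum, smul_smul]

def iotaC {M : ℕ} {nn : Fin M → ℕ} (j : Fin M) :
    EuclideanSpace ℂ (Fin (nn j)) →L[ℂ] seriesSpace M nn :=
  LinearMap.toContinuousLinearMap (iotaL j)

lemma iotaC_apply (j : Fin M) (v : EuclideanSpace ℂ (Fin (nn j))) :
    iotaC j v = ∑ c, v c • stdVec (gv j c) := rfl

lemma inner_stdVec (x : SeriesV M nn) (f : seriesSpace M nn) : ⟪stdVec x, f⟫ = f x := by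
  rw [stdVec, lp.inner_single_left]
  simp

lemma inner_stdVec_stdVec (x y : SeriesV M nn) :
    ⟪stdVec x, stdVec y⟫ = if x = y then (1 : ℂ) else 0 := by
  rw [inner_stdVec, stdVec, lp.single_apply]
  simp [Pi.single_apply, eq_comm]

lemma inner_stdVec_iota (x : SeriesV M nn) (j : Fin M) (v : EuclideanSpace ℂ (Fin (nn j))) :
    ⟪stdVec x, iotaC j v⟫ = ∑ c, v c * (if x = gv j c then 1 else 0) := by
  rw [iotaC_apply, inner_sum]
  refine Finset.sum_congr rfl fun c _ => ?_
  rw [inner_smul_right, inner_stdVec_stdVec]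

lemma inner_iota_left (j : Fin M) (v : EuclideanSpace ℂ (Fin (nn j))) (f : seriesSpace M nn) :
    ⟪iotaC j v, f⟫ = ∑ c, (starRingEnd ℂ) (v c) * f (gv j c) := by
  rw [iotaC_apply, sum_inner]
  refine Finset.sum_congr rfl fun c _ => ?_
  rw [inner_smul_left, inner_stdVec]

lemma inner_iota_iota (j : Fin M) (v w : EuclideanSpace ℂ (Fin (nn j))) :
    ⟪iotaC j v, iotaC j w⟫ = ⟪v, w⟫ := by
  rw [inner_iota_left]
  rw [PiLp.inner_apply]
  refine Finset.sum_congr rfl fun c _ => ?_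
  have : (iotaC j w : ∀ _ : SeriesV M nn, ℂ) (gv j c) = w c := by
    rw [← inner_stdVec, inner_stdVec_iota]
    rw [Finset.sum_eq_single c]
    · simp
    · intro c' _ hne
      rw [if_neg, mul_zero]
      rw [gv_eq_gv_iff]
      exact fun h => hne h.symm
    · simp
  rw [this]
  simp [RCLike.inner_apply, mul_comm]

lemma norm_iota (j : Fin M) (v : EuclideanSpace ℂ (Fin (nn j))) : ‖iotaC j v‖ = ‖v‖ := by
  rw [norm_eq_sqrt_re_inner (𝕜 := ℂ), norm_eq_sqrt_re_inner (𝕜 := ℂ) v, inner_iota_iota]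

lemma iota_single (j : Fin M) (a : Fin (nn j)) :
    iotaC j (EuclideanSpace.single a (1 : ℂ)) = stdVec (gv j a) := by
  rw [iotaC_apply, Finset.sum_eq_single a
    (fun c _ hne => by simp [EuclideanSpace.single_apply, hne]) (by simp)]
  try simp

/-! ### The matrix side -/

def Bop (G : ∀ i : Fin M, SimpleGraph (Fin (nn i))) [∀ i, DecidableRel (G i).Adj] (j : Fin M) :
    EuclideanSpace ℂ (Fin (nn j)) →L[ℂ] EuclideanSpace ℂ (Fin (nn j)) :=
  Matrix.toEuclideanCLM (𝕜 := ℂ) ((G j).adjMatrix ℂ)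

lemma toEuclideanCLM_coord {n : Type*} [Fintype n] [DecidableEq n]
    (X : Matrix n n ℂ) (w : EuclideanSpace ℂ n) (c : n) :
    (Matrix.toEuclideanCLM (𝕜 := ℂ) X w) c = ∑ c', X c c' * w c' := by
  have h := Matrix.ofLp_toEuclideanCLM (𝕜 := ℂ) X w
  have h2 : (Matrix.toEuclideanCLM (𝕜 := ℂ) X w) c
      = (WithLp.ofLp (Matrix.toEuclideanCLM (𝕜 := ℂ) X w)) c := rfl
  rw [h2, h]
  simp [Matrix.mulVec, dotProduct]

variable (G : ∀ i : Fin M, SimpleGraph (Fin (nn i))) [∀ i, DecidableRel (G i).Adj]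

lemma Bop_coord (j : Fin M) (v : EuclideanSpace ℂ (Fin (nn j))) (c : Fin (nn j)) :
    (Bop G j v) c = ∑ c', (if (G j).Adj c c' then (1 : ℂ) else 0) * v c' := by
  rw [Bop, toEuclideanCLM_coord]
  simp [SimpleGraph.adjMatrix_apply]

lemma Bop_selfAdjoint (j : Fin M) : _root_.IsSelfAdjoint (Bop G j) := by
  rw [_root_.IsSelfAdjoint, Bop, ← map_star]
  congr 1
  rw [Matrix.star_eq_conjTranspose]
  ext c c'
  simp only [Matrix.conjTranspose_apply, SimpleGraph.adjMatrix_apply]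
  rw [apply_ite (star : ℂ → ℂ)]
  simp only [star_one, star_zero]
  exact if_congr ((G j).adj_comm c' c) rfl rfl

lemma sum_Bop {dd : Fin M → ℕ} (hreg : ∀ i : Fin M, (G i).IsRegularOfDegree (dd i))
    (j : Fin M) (v : EuclideanSpace ℂ (Fin (nn j))) (hv : ∑ c, v c = 0) :
    ∑ c, (Bop G j v) c = 0 := by
  have key : ∀ c' : Fin (nn j), (∑ c, if (G j).Adj c c' then (1:ℂ) else 0) = (dd j : ℂ) := by
    intro c'
    have h1 : ∀ c : Fin (nn j), (if (G j).Adj c c' then (1:ℂ) else 0)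
        = if (G j).Adj c' c then (1:ℂ) else 0 :=
      fun c => if_congr ((G j).adj_comm c c') rfl rfl
    simp only [h1]
    rw [Finset.sum_boole]
    have h2 : Finset.univ.filter (fun c => (G j).Adj c' c) = (G j).neighborFinset c' := by
      ext c; simp [SimpleGraph.mem_neighborFinset]
    rw [h2]
    exact_mod_cast congrArg Nat.cast (hreg j c')
  calc ∑ c, (Bop G j v) c
      = ∑ c, ∑ c', (if (G j).Adj c c' then (1:ℂ) else 0) * v c' :=
        Finset.sum_congr rfl fun c _ => Bop_coord G j v c
    _ = ∑ c', ∑ c, (if (G j).Adj c c' then (1:ℂ) else 0) * v c' := Finset.sum_comm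
    _ = ∑ c', (∑ c, if (G j).Adj c c' then (1:ℂ) else 0) * v c' :=
        Finset.sum_congr rfl fun c' _ => (Finset.sum_mul _ _ _).symm
    _ = ∑ c', (dd j : ℂ) * v c' := Finset.sum_congr rfl fun c' _ => by rw [key]
    _ = 0 := by rw [← Finset.mul_sum, hv, mul_zero]

/-! ### The intertwining property -/

lemma A_iota (A : seriesSpace M nn →L[ℂ] seriesSpace M nn)
    (hA : ∀ x y : SeriesV M nn, (inner ℂ (stdVec x) (A (stdVec y)) : ℂ)
      = if seriesAdj M nn G x y then 1 else 0)
    (j : Fin M) (v : EuclideanSpace ℂ (Fin (nn j))) (hv : ∑ c, v c = 0) :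
    A (iotaC j v) = iotaC j (Bop G j v) := by
  apply lp.ext
  funext x
  have hL : (A (iotaC j v) : ∀ _ : SeriesV M nn, ℂ) x
      = ∑ c, v c * (if seriesAdj M nn G x (gv j c) then 1 else 0) := by
    rw [← inner_stdVec x (A (iotaC j v)), iotaC_apply, map_sum]
    rw [inner_sum]
    refine Finset.sum_congr rfl fun c _ => ?_
    rw [A.map_smul, inner_smul_right, hA]
  have hR : (iotaC j (Bop G j v) : ∀ _ : SeriesV M nn, ℂ) x
      = ∑ c, (Bop G j v) c * (if x = gv j c then 1 else 0) := by
    rw [← inner_stdVec x, inner_stdVec_iota]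
  rw [hL, hR]
  rcases x with _ | (⟨i, cc⟩ | k)
  · -- the vertex u
    have hR0 : ∑ c, (Bop G j v) c * (if (Sum.inl () : SeriesV M nn) = gv j c then (1:ℂ) else 0)
        = 0 := by
      refine Finset.sum_eq_zero fun c _ => ?_
      rw [if_neg (by simp [gv]), mul_zero]
    rw [hR0]
    by_cases h0 : (j : ℕ) = 0
    · calc ∑ c, v c * (if seriesAdj M nn G (Sum.inl ()) (gv j c) then (1:ℂ) else 0)
          = ∑ c, v c := by
            refine Finset.sum_congr rfl fun c _ => ?_
            rw [if_pos ((adj_u_gv G j c).mpr h0), mul_one]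
        _ = 0 := hv
    · refine Finset.sum_eq_zero fun c _ => ?_
      rw [if_neg (fun h => h0 ((adj_u_gv G j c).mp h)), mul_zero]
  · -- a graph vertex, x = gv i cc
    show ∑ c, v c * (if seriesAdj M nn G (gv i cc) (gv j c) then (1:ℂ) else 0)
      = ∑ c, (Bop G j v) c * (if gv i cc = gv j c then (1:ℂ) else 0)
    by_cases hij : i = j
    · subst hij
      have hR1 : ∑ c, (Bop G i v) c * (if gv i cc = gv i c then (1:ℂ) else 0)
          = (Bop G i v) cc := by
        rw [Finset.sum_eq_single cc]
        · simp
        · intro c' _ hne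
          rw [if_neg (fun h => hne (gv_eq_gv_iff.mp h).symm), mul_zero]
        · simp
      rw [hR1, Bop_coord]
      refine Finset.sum_congr rfl fun c _ => ?_
      rw [if_congr (adj_gv_same G i cc c) rfl rfl, mul_comm]
    · have hR0 : ∑ c, (Bop G j v) c * (if gv i cc = gv j c then (1:ℂ) else 0) = 0 := by
        refine Finset.sum_eq_zero fun c _ => ?_
        rw [if_neg (fun h => hij (gv_inj h).1), mul_zero]
      rw [hR0]
      by_cases hP : ((i : ℕ) = (j : ℕ) + 1 ∨ (j : ℕ) = (i : ℕ) + 1)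
      · calc ∑ c, v c * (if seriesAdj M nn G (gv i cc) (gv j c) then (1:ℂ) else 0)
            = ∑ c, v c := by
              refine Finset.sum_congr rfl fun c _ => ?_
              rw [if_pos ((adj_gv_ne G hij cc c).mpr hP), mul_one]
          _ = 0 := hv
      · refine Finset.sum_eq_zero fun c _ => ?_
        rw [if_neg (fun h => hP ((adj_gv_ne G hij cc c).mp h)), mul_zero]
  · -- a tail vertex
    have hR0 : ∑ c, (Bop G j v) c *
        (if (Sum.inr (Sum.inr k) : SeriesV M nn) = gv j c then (1:ℂ) else 0) = 0 := by
      refine Finset.sum_eq_zero fun c _ => ?_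
      rw [if_neg (by simp [gv]), mul_zero]
    rw [hR0]
    refine Finset.sum_eq_zero fun c _ => ?_
    rw [if_neg (adj_tail_gv G k j c), mul_zero]

lemma pow_A_iota {dd : Fin M → ℕ} (hreg : ∀ i : Fin M, (G i).IsRegularOfDegree (dd i))
    (A : seriesSpace M nn →L[ℂ] seriesSpace M nn)
    (hA : ∀ x y : SeriesV M nn, (inner ℂ (stdVec x) (A (stdVec y)) : ℂ)
      = if seriesAdj M nn G x y then 1 else 0)
    (j : Fin M) (z : ℂ) (k : ℕ) :
    ∀ v : EuclideanSpace ℂ (Fin (nn j)), (∑ c, v c = 0) →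
      ((z • A) ^ k) (iotaC j v) = iotaC j (((z • Bop G j) ^ k) v)
        ∧ ∑ c, (((z • Bop G j) ^ k) v) c = 0 := by
  induction k with
  | zero => intro v hv; simp [hv]
  | succ k ih =>
    intro v hv
    have hBv : ((z • Bop G j) v) = z • (Bop G j v) := rfl
    have hsum : ∑ c, ((z • Bop G j) v) c = 0 := by
      have : ∀ c, ((z • Bop G j) v) c = z * (Bop G j v) c := fun c => rfl
      simp only [this, ← Finset.mul_sum, sum_Bop G hreg j v hv, mul_zero]
    have hstep : (z • A) (iotaC j v) = iotaC j ((z • Bop G j) v) := by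
      rw [ContinuousLinearMap.smul_apply, A_iota G A hA j v hv, hBv]
      exact ((iotaC j).map_smul z _).symm
    obtain ⟨ih1, ih2⟩ := ih ((z • Bop G j) v) hsum
    have hpowA : ((z • A) ^ (k+1)) (iotaC j v)
        = ((z • A) ^ k) ((z • A) (iotaC j v)) := by rw [pow_succ]; rfl
    have hpowB : (((z • Bop G j) ^ (k+1)) v)
        = ((z • Bop G j) ^ k) ((z • Bop G j) v) := by rw [pow_succ]; rfl
    constructor
    · rw [hpowA, hstep, ih1, hpowB]
    · rw [hpowB]; exact ih2

set_option maxHeartbeats 1000000 in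
lemma exp_A_iota {dd : Fin M → ℕ} (hreg : ∀ i : Fin M, (G i).IsRegularOfDegree (dd i))
    (A : seriesSpace M nn →L[ℂ] seriesSpace M nn)
    (hA : ∀ x y : SeriesV M nn, (inner ℂ (stdVec x) (A (stdVec y)) : ℂ)
      = if seriesAdj M nn G x y then 1 else 0)
    (j : Fin M) (z : ℂ) (v : EuclideanSpace ℂ (Fin (nn j))) (hv : ∑ c, v c = 0) :
    NormedSpace.exp (z • A) (iotaC j v) = iotaC j (NormedSpace.exp (z • Bop G j) v) := by
  have hs1 : Summable (fun k : ℕ => ((k ! : ℂ)⁻¹) • (z • A) ^ k) :=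
    NormedSpace.expSeries_summable' (𝕂 := ℂ) (z • A)
  have hs2 : Summable (fun k : ℕ => ((k ! : ℂ)⁻¹) • (z • Bop G j) ^ k) :=
    NormedSpace.expSeries_summable' (𝕂 := ℂ) (z • Bop G j)
  rw [NormedSpace.exp_eq_tsum ℂ, NormedSpace.exp_eq_tsum ℂ]
  have l1 : (∑' k : ℕ, ((k ! : ℂ)⁻¹) • (z • A) ^ k) (iotaC j v)
      = ∑' k : ℕ, (((k ! : ℂ)⁻¹) • (z • A) ^ k) (iotaC j v) :=
    (ContinuousLinearMap.apply ℂ _ (iotaC j v)).map_tsum hs1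
  have r1 : (∑' k : ℕ, ((k ! : ℂ)⁻¹) • (z • Bop G j) ^ k) v
      = ∑' k : ℕ, (((k ! : ℂ)⁻¹) • (z • Bop G j) ^ k) v :=
    (ContinuousLinearMap.apply ℂ _ v).map_tsum hs2
  have hs3 : Summable (fun k : ℕ => (((k ! : ℂ)⁻¹) • (z • Bop G j) ^ k) v) :=
    hs2.map (ContinuousLinearMap.apply ℂ _ v) (ContinuousLinearMap.apply ℂ _ v).continuous
  have r2 : iotaC j (∑' k : ℕ, (((k ! : ℂ)⁻¹) • (z • Bop G j) ^ k) v)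
      = ∑' k : ℕ, iotaC j ((((k ! : ℂ)⁻¹) • (z • Bop G j) ^ k) v) := (iotaC j).map_tsum hs3
  rw [l1, r1, r2]
  refine tsum_congr fun k => ?_
  calc (((k ! : ℂ)⁻¹) • (z • A) ^ k) (iotaC j v)
      = ((k ! : ℂ)⁻¹) • (((z • A) ^ k) (iotaC j v)) := rfl
    _ = ((k ! : ℂ)⁻¹) • iotaC j (((z • Bop G j) ^ k) v) := by
        rw [(pow_A_iota G hreg A hA j z k v hv).1]
    _ = iotaC j (((k ! : ℂ)⁻¹) • (((z • Bop G j) ^ k) v)) := ((iotaC j).map_smul _ _).symm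
    _ = iotaC j ((((k ! : ℂ)⁻¹) • (z • Bop G j) ^ k) v) := rfl

/-! ### Unitarity of the exponential of a skew-adjoint operator -/

lemma norm_exp_skew {H : Type*} [NormedAddCommGroup H] [InnerProductSpace ℂ H] [CompleteSpace H]
    (T : H →L[ℂ] H) (hT : _root_.IsSelfAdjoint T) (z : ℂ) (hz : star z = -z) (x : H) :
    ‖NormedSpace.exp (z • T) x‖ = ‖x‖ := by
  set U := NormedSpace.exp (z • T) with hU
  have hstar : star (z • T) = -(z • T) := by
    rw [star_smul, hT.star_eq, hz, neg_smul]
  have hcomm : Commute (-(z • T)) (z • T) := (Commute.refl (z • T)).neg_left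
  letI : NormedAlgebra ℚ (H →L[ℂ] H) := NormedAlgebra.restrictScalars ℚ ℂ _
  have hunit : star U * U = 1 := by
    rw [hU, NormedSpace.star_exp, hstar, ← NormedSpace.exp_add_of_commute hcomm,
      neg_add_cancel, NormedSpace.exp_zero]
  have h4 : ContinuousLinearMap.adjoint U (U x) = x := by
    rw [← ContinuousLinearMap.star_eq_adjoint]
    calc star U (U x) = (star U * U) x := rfl
      _ = x := by rw [hunit]; rfl
  have h3 : (inner ℂ (U x) (U x) : ℂ) = inner ℂ x x := by
    rw [← ContinuousLinearMap.adjoint_inner_left U x (U x), h4]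
  rw [norm_eq_sqrt_re_inner (𝕜 := ℂ) (U x), h3, ← norm_eq_sqrt_re_inner (𝕜 := ℂ)]

lemma adjoint_exp_skew {H : Type*} [NormedAddCommGroup H] [InnerProductSpace ℂ H] [CompleteSpace H]
    (T : H →L[ℂ] H) (hT : _root_.IsSelfAdjoint T) (z : ℂ) :
    ContinuousLinearMap.adjoint (NormedSpace.exp (z • T))
      = NormedSpace.exp ((star z) • T) := by
  rw [← ContinuousLinearMap.star_eq_adjoint, NormedSpace.star_exp, star_smul, hT.star_eq]

/-! ### Matrix exponential entries via the CLM exponential -/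

lemma matExp_entry {n : ℕ} (X : Matrix (Fin n) (Fin n) ℂ) (b a : Fin n) :
    NormedSpace.exp X b a
      = (inner ℂ (EuclideanSpace.single b (1:ℂ))
          (NormedSpace.exp (Matrix.toEuclideanCLM (𝕜 := ℂ) X)
            (EuclideanSpace.single a (1:ℂ))) : ℂ) := by
  have key : Matrix.toEuclideanCLM (𝕜 := ℂ) (NormedSpace.exp X)
      = NormedSpace.exp (Matrix.toEuclideanCLM (𝕜 := ℂ) X) := by
    letI : MetricSpace (Matrix (Fin n) (Fin n) ℂ) := Matrix.instL2OpMetricSpace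
    letI : NormedAddCommGroup (Matrix (Fin n) (Fin n) ℂ) := Matrix.instL2OpNormedAddCommGroup
    letI : NormedSpace ℂ (Matrix (Fin n) (Fin n) ℂ) := Matrix.instL2OpNormedSpace
    letI : NormedRing (Matrix (Fin n) (Fin n) ℂ) := Matrix.instL2OpNormedRing
    letI : NormedAlgebra ℂ (Matrix (Fin n) (Fin n) ℂ) := Matrix.instL2OpNormedAlgebra
    have hcont : Continuous (Matrix.toEuclideanCLM (n := Fin n) (𝕜 := ℂ)) := by
      let lm : Matrix (Fin n) (Fin n) ℂ →ₗ[ℂ]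
          (EuclideanSpace ℂ (Fin n) →L[ℂ] EuclideanSpace ℂ (Fin n)) :=
        { toFun := fun Y => Matrix.toEuclideanCLM (𝕜 := ℂ) Y
          map_add' := fun Y Z => map_add _ Y Z
          map_smul' := fun r Y => map_smul _ r Y }
      exact lm.continuous_of_finiteDimensional
    letI : NormedAlgebra ℚ (Matrix (Fin n) (Fin n) ℂ) := NormedAlgebra.restrictScalars ℚ ℂ _
    letI : NormedAlgebra ℚ (EuclideanSpace ℂ (Fin n) →L[ℂ] EuclideanSpace ℂ (Fin n)) :=
      NormedAlgebra.restrictScalars ℚ ℂ _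
    exact NormedSpace.map_exp (Matrix.toEuclideanCLM (n := Fin n) (𝕜 := ℂ)) hcont X
  rw [← key, EuclideanSpace.inner_single_left, toEuclideanCLM_coord]
  simp [EuclideanSpace.single_apply]

end Aux

set_option maxHeartbeats 2000000

/-- Let `𝒢 = P_m({u}, G_1, …, G_{m-1})` be a series graph, each `G_i` being `d_i`-regular
on `n_i` vertices, and let `H` be `𝒢` with a one-way infinite path attached at `u`.  For
vertices `a, b` of `G_j` and all real `t`,
`|⟨e_b, e^{-itA(H)} e_a⟩ - ⟨e_b, e^{-itA(G_j)} e_a⟩| ≤ 2/n_j`; in particular if `G_j` has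
perfect state transfer between `a` and `b` at time `τ` then
`|⟨e_b, e^{-iτA(H)} e_a⟩| ≥ 1 - 2/n_j`. -/
theorem series_transfer_bound (M : ℕ) (hM : 1 ≤ M) (nn : Fin M → ℕ) (dd : Fin M → ℕ)
    (G : ∀ i : Fin M, SimpleGraph (Fin (nn i))) [∀ i, DecidableRel (G i).Adj]
    (hreg : ∀ i : Fin M, (G i).IsRegularOfDegree (dd i))
    (A : seriesSpace M nn →L[ℂ] seriesSpace M nn) (hsa : IsSelfAdjoint A)
    (hA : ∀ x y : SeriesV M nn, (inner ℂ (stdVec x) (A (stdVec y)) : ℂ)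
      = if seriesAdj M nn G x y then 1 else 0)
    (j : Fin M) (a b : Fin (nn j)) :
    (∀ t : ℝ,
      ‖((inner ℂ (stdVec (gv j b))
              (NormedSpace.exp ((-(t : ℂ) * Complex.I) • A) (stdVec (gv j a))) : ℂ)
            - NormedSpace.exp ((-(t : ℂ) * Complex.I) • (G j).adjMatrix ℂ) b a)‖
        ≤ 2 / (nn j : ℝ)) ∧
    (∀ τ : ℝ,
      ‖(NormedSpace.exp ((-(τ : ℂ) * Complex.I) • (G j).adjMatrix ℂ) b a)‖ = 1 →
      1 - 2 / (nn j : ℝ)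
        ≤ ‖(inner ℂ (stdVec (gv j b))
              (NormedSpace.exp ((-(τ : ℂ) * Complex.I) • A) (stdVec (gv j a))) : ℂ)‖) := by
  have hn : 0 < nn j := a.pos
  have hnC : (nn j : ℂ) ≠ 0 := by exact_mod_cast hn.ne'
  have hnR : (0:ℝ) < (nn j : ℝ) := by exact_mod_cast hn
  set u0 : EuclideanSpace ℂ (Fin (nn j)) :=
    ((nn j : ℂ))⁻¹ • ((WithLp.equiv 2 (Fin (nn j) → ℂ)).symm (fun _ => 1)) with hu0
  have hu0c : ∀ c, u0 c = ((nn j : ℂ))⁻¹ := by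
    intro c; simp [hu0]
  have hsumu0 : ∑ c, u0 c = 1 := by
    simp only [hu0c]
    rw [Finset.sum_const, Finset.card_univ, Fintype.card_fin, nsmul_eq_mul,
      mul_inv_cancel₀ hnC]
  set ea : EuclideanSpace ℂ (Fin (nn j)) := EuclideanSpace.single a 1 with hea0
  set eb : EuclideanSpace ℂ (Fin (nn j)) := EuclideanSpace.single b 1 with heb0
  have hsum_single : ∀ x : Fin (nn j), ∑ c, (EuclideanSpace.single x (1:ℂ)) c = 1 := by
    intro x
    rw [Finset.sum_eq_single x (fun c _ hne => by simp [EuclideanSpace.single_apply, hne])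
      (by simp)]
    simp
  set va : EuclideanSpace ℂ (Fin (nn j)) := ea - u0 with hva0
  set vb : EuclideanSpace ℂ (Fin (nn j)) := eb - u0 with hvb0
  have hva : ∑ c, va c = 0 := by
    simp only [hva0, PiLp.sub_apply, Finset.sum_sub_distrib, hsumu0, hea0, hsum_single, sub_self]
  have hvb : ∑ c, vb c = 0 := by
    simp only [hvb0, PiLp.sub_apply, Finset.sum_sub_distrib, hsumu0, heb0, hsum_single, sub_self]
  have hea : ea = va + u0 := (sub_add_cancel ea u0).symm
  have heb : eb = vb + u0 := (sub_add_cancel eb u0).symm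
  have hBsa := Bop_selfAdjoint G j
  have hinner_u0 : (inner ℂ u0 u0 : ℂ) = ((nn j : ℂ))⁻¹ := by
    rw [PiLp.inner_apply]
    simp only [hu0c, RCLike.inner_apply, map_inv₀, map_natCast]
    rw [Finset.sum_const, Finset.card_univ, Fintype.card_fin, nsmul_eq_mul]
    field_simp
  have hnorm_u0 : ‖u0‖ * ‖u0‖ = 1 / (nn j : ℝ) := by
    have h1 : ‖u0‖ = Real.sqrt ((nn j : ℝ))⁻¹ := by
      rw [norm_eq_sqrt_re_inner (𝕜 := ℂ), hinner_u0]
      norm_num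
    rw [h1, Real.mul_self_sqrt (by positivity)]
    rw [one_div]
  have main : ∀ t : ℝ,
      ‖((inner ℂ (stdVec (gv j b))
              (NormedSpace.exp ((-(t : ℂ) * Complex.I) • A) (stdVec (gv j a))) : ℂ)
            - NormedSpace.exp ((-(t : ℂ) * Complex.I) • (G j).adjMatrix ℂ) b a)‖
        ≤ 2 / (nn j : ℝ) := by
    intro t
    set z : ℂ := -(t : ℂ) * Complex.I with hz
    have hzstar : star z = -z := by
      rw [hz]
      simp [Complex.star_def, _root_.map_mul, map_neg, Complex.conj_ofReal, Complex.conj_I]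
    set U := NormedSpace.exp (z • A) with hU
    set E := NormedSpace.exp (z • Bop G j) with hE
    have key_a : U (iotaC j va) = iotaC j (E va) := exp_A_iota G hreg A hA j z va hva
    have keyb : ContinuousLinearMap.adjoint U (iotaC j vb)
        = iotaC j (NormedSpace.exp ((-z) • Bop G j) vb) := by
      rw [hU, adjoint_exp_skew A hsa z, hzstar]
      exact exp_A_iota G hreg A hA j (-z) vb hvb
    have cross : (inner ℂ (iotaC j vb) (U (iotaC j u0)) : ℂ) = inner ℂ vb (E u0) := by
      have h1 : (inner ℂ (iotaC j vb) (U (iotaC j u0)) : ℂ)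
          = inner ℂ (ContinuousLinearMap.adjoint U (iotaC j vb)) (iotaC j u0) :=
        (ContinuousLinearMap.adjoint_inner_left U (iotaC j u0) (iotaC j vb)).symm
      rw [h1, keyb, inner_iota_iota]
      have h2 := ContinuousLinearMap.adjoint_inner_right
        (NormedSpace.exp ((-z) • Bop G j)) vb u0
      rw [← h2, adjoint_exp_skew (Bop G j) hBsa (-z), star_neg, hzstar, neg_neg, ← hE]
    have hstd_a : stdVec (gv j a) = iotaC j ea := (iota_single j a).symm
    have hstd_b : stdVec (gv j b) = iotaC j eb := (iota_single j b).symm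
    have hbig : (inner ℂ (stdVec (gv j b)) (U (stdVec (gv j a))) : ℂ)
        = inner ℂ eb (E va) + inner ℂ vb (E u0) + inner ℂ (iotaC j u0) (U (iotaC j u0)) := by
      rw [hstd_a, hstd_b, hea]
      calc (inner ℂ (iotaC j eb) (U (iotaC j (va + u0))) : ℂ)
          = inner ℂ (iotaC j eb) (U (iotaC j va)) + inner ℂ (iotaC j eb) (U (iotaC j u0)) := by
            rw [map_add (iotaC j), map_add U, inner_add_right]
        _ = inner ℂ (iotaC j eb) (iotaC j (E va)) + inner ℂ (iotaC j eb) (U (iotaC j u0)) := by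
            rw [key_a]
        _ = inner ℂ eb (E va) + inner ℂ (iotaC j eb) (U (iotaC j u0)) := by rw [inner_iota_iota]
        _ = inner ℂ eb (E va)
            + (inner ℂ (iotaC j vb) (U (iotaC j u0)) + inner ℂ (iotaC j u0) (U (iotaC j u0))) := by
            have h7 : iotaC j eb = iotaC j vb + iotaC j u0 := by rw [heb, map_add]
            rw [h7, inner_add_left]
        _ = inner ℂ eb (E va) + inner ℂ vb (E u0) + inner ℂ (iotaC j u0) (U (iotaC j u0)) := by
            rw [cross, add_assoc]
    have hmat : NormedSpace.exp (z • (G j).adjMatrix ℂ) b a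
        = inner ℂ eb (E va) + inner ℂ vb (E u0) + (inner ℂ u0 (E u0) : ℂ) := by
      rw [matExp_entry]
      have hsm : Matrix.toEuclideanCLM (𝕜 := ℂ) (z • (G j).adjMatrix ℂ) = z • Bop G j := by
        rw [_root_.map_smul]; rfl
      rw [hsm, ← hE, ← hea0, ← heb0]
      calc (inner ℂ eb (E ea) : ℂ) = inner ℂ eb (E va) + inner ℂ eb (E u0) := by
            rw [hea, map_add, inner_add_right]
        _ = inner ℂ eb (E va) + (inner ℂ vb (E u0) + inner ℂ u0 (E u0)) := by
            have h8 : (inner ℂ eb (E u0) : ℂ) = inner ℂ vb (E u0) + inner ℂ u0 (E u0) := by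
              rw [heb, inner_add_left]
            rw [h8]
        _ = inner ℂ eb (E va) + inner ℂ vb (E u0) + inner ℂ u0 (E u0) := by rw [add_assoc]
    have hdiff : (inner ℂ (stdVec (gv j b)) (U (stdVec (gv j a))) : ℂ)
          - NormedSpace.exp (z • (G j).adjMatrix ℂ) b a
        = inner ℂ (iotaC j u0) (U (iotaC j u0)) - (inner ℂ u0 (E u0) : ℂ) := by
      rw [hbig, hmat]; ring
    rw [hdiff]
    have b1 : ‖(inner ℂ (iotaC j u0) (U (iotaC j u0)) : ℂ)‖ ≤ 1 / (nn j : ℝ) := by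
      calc ‖(inner ℂ (iotaC j u0) (U (iotaC j u0)) : ℂ)‖
          ≤ ‖iotaC j u0‖ * ‖U (iotaC j u0)‖ := norm_inner_le_norm _ _
        _ = ‖u0‖ * ‖u0‖ := by
            rw [hU, norm_exp_skew A hsa z hzstar, norm_iota]
        _ = 1 / (nn j : ℝ) := hnorm_u0
    have b2 : ‖(inner ℂ u0 (E u0) : ℂ)‖ ≤ 1 / (nn j : ℝ) := by
      calc ‖(inner ℂ u0 (E u0) : ℂ)‖ ≤ ‖u0‖ * ‖E u0‖ := norm_inner_le_norm _ _
        _ = ‖u0‖ * ‖u0‖ := by rw [hE, norm_exp_skew (Bop G j) hBsa z hzstar]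
        _ = 1 / (nn j : ℝ) := hnorm_u0
    calc ‖(inner ℂ (iotaC j u0) (U (iotaC j u0)) - (inner ℂ u0 (E u0) : ℂ))‖
        = ‖inner ℂ (iotaC j u0) (U (iotaC j u0)) - (inner ℂ u0 (E u0) : ℂ)‖ :=
          rfl
      _ ≤ ‖(inner ℂ (iotaC j u0) (U (iotaC j u0)) : ℂ)‖ + ‖(inner ℂ u0 (E u0) : ℂ)‖ :=
          norm_sub_le _ _
      _ ≤ 1 / (nn j : ℝ) + 1 / (nn j : ℝ) := add_le_add b1 b2
      _ = 2 / (nn j : ℝ) := by ring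
  refine ⟨main, fun τ habs => ?_⟩
  have h1 := main τ
  set X : ℂ := inner ℂ (stdVec (gv j b))
      (NormedSpace.exp ((-(τ : ℂ) * Complex.I) • A) (stdVec (gv j a))) with hX
  set Y : ℂ := NormedSpace.exp ((-(τ : ℂ) * Complex.I) • (G j).adjMatrix ℂ) b a with hY
  have h2 : ‖Y‖ - ‖X‖ ≤ ‖Y - X‖ := norm_sub_norm_le _ _
  have h3 : ‖Y - X‖ = ‖X - Y‖ := norm_sub_rev _ _
  have h4 : ‖X - Y‖ ≤ 2 / (nn j : ℝ) := by
    exact h1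
  have h5 : ‖Y‖ = 1 := by exact habs
  linarith
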